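/- Let l be a finite distributive lattice (with its induced complete-lattice structure) and Σ a finite alphabet (a finite type). If f₁, f₂ : (ℕ → Σ) → l are each the ω-language of some l-VDRA over Σ, then the pointwise join f₁ ⊔ f₂ is also the ω-language of some l-VDRA over Σ. -/

import Mathlib

/-- The unique run of a deterministic automaton `(δ, q0)` on the infinite
word `w`. -/
def detRun {Q A : Type*} (δ : Q → A → Q) (q0 : Q) (w : ℕ → A) : ℕ → Q
  | 0 => q0
  | i + 1 => δ (detRun δ q0 w i) (w i)

/-- The ω-language of an `l`-valued deterministic Rabin automaton
`(Q, δ, q0, F)`. -/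
def vdraLang {l Q A : Type*} [CompleteLattice l]
    (δ : Q → A → Q) (q0 : Q) (F : Set Q → Set Q → l) (w : ℕ → A) : l :=
  ⨆ H : Set Q, ⨆ K : Set Q,
    ⨆ _ : (∃ n : ℕ, ∀ m ≥ n, detRun δ q0 w m ∉ H) ∧
            (∀ n : ℕ, ∃ m ≥ n, detRun δ q0 w m ∈ K),
      F H K

lemma detRun_prod {Q₁ Q₂ A : Type*} (δ₁ : Q₁ → A → Q₁) (δ₂ : Q₂ → A → Q₂)
    (q1 : Q₁) (q2 : Q₂) (w : ℕ → A) (n : ℕ) :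
    detRun (fun p a => (δ₁ p.1 a, δ₂ p.2 a)) (q1, q2) w n
      = (detRun δ₁ q1 w n, detRun δ₂ q2 w n) := by
  induction n with
  | zero => rfl
  | succ n ih => simp [detRun, ih]

/-- Over a finite distributive (complete) lattice and a finite alphabet,
the class of ω-languages of `l`-VDRAs is closed under pointwise join. -/
theorem stmt17 {l : Type} [CompleteLattice l] [Fintype l]
    (hd : ∀ x y z : l, x ⊓ (y ⊔ z) = (x ⊓ y) ⊔ (x ⊓ z))
    {A : Type} [Fintype A] (f₁ f₂ : (ℕ → A) → l)
    (h₁ : ∃ (Q : Type) (_ : Fintype Q) (δ : Q → A → Q) (q0 : Q)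
        (F : Set Q → Set Q → l), ∀ w : ℕ → A, f₁ w = vdraLang δ q0 F w)
    (h₂ : ∃ (Q : Type) (_ : Fintype Q) (δ : Q → A → Q) (q0 : Q)
        (F : Set Q → Set Q → l), ∀ w : ℕ → A, f₂ w = vdraLang δ q0 F w) :
    ∃ (Q : Type) (_ : Fintype Q) (δ : Q → A → Q) (q0 : Q)
        (F : Set Q → Set Q → l), ∀ w : ℕ → A, f₁ w ⊔ f₂ w = vdraLang δ q0 F w := by
  obtain ⟨Q₁, i₁, δ₁, q1, F₁, hF₁⟩ := h₁
  obtain ⟨Q₂, i₂, δ₂, q2, F₂, hF₂⟩ := h₂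
  set δ : Q₁ × Q₂ → A → Q₁ × Q₂ := fun p a => (δ₁ p.1 a, δ₂ p.2 a) with hδ
  set F : Set (Q₁ × Q₂) → Set (Q₁ × Q₂) → l := fun H K =>
      (⨆ H₁ : Set Q₁, ⨆ K₁ : Set Q₁,
        ⨆ _ : H = Prod.fst ⁻¹' H₁ ∧ K = Prod.fst ⁻¹' K₁, F₁ H₁ K₁) ⊔
      (⨆ H₂ : Set Q₂, ⨆ K₂ : Set Q₂,
        ⨆ _ : H = Prod.snd ⁻¹' H₂ ∧ K = Prod.snd ⁻¹' K₂, F₂ H₂ K₂) with hF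
  refine ⟨Q₁ × Q₂, inferInstance, δ, (q1, q2), F, fun w => ?_⟩
  have hrun : ∀ n, detRun δ (q1, q2) w n = (detRun δ₁ q1 w n, detRun δ₂ q2 w n) := by
    intro n
    induction n with
    | zero => rfl
    | succ n ih => simp [detRun, ih, hδ, detRun_prod]
  rw [hF₁ w, hF₂ w]
  unfold vdraLang
  apply le_antisymm
  · apply sup_le
    · refine iSup_le fun H₁ => iSup_le fun K₁ => iSup_le fun ⟨⟨n, hn⟩, hK⟩ => ?_
      have hcond : (∃ n : ℕ, ∀ m ≥ n, detRun δ (q1, q2) w m ∉ Prod.fst ⁻¹' H₁) ∧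
          (∀ n : ℕ, ∃ m ≥ n, detRun δ (q1, q2) w m ∈ Prod.fst ⁻¹' K₁) := by
        constructor
        · exact ⟨n, fun m hm => by simp [hrun m, hn m hm]⟩
        · intro n'
          obtain ⟨m, hm, hmem⟩ := hK n'
          exact ⟨m, hm, by simp [hrun m, hmem]⟩
      refine le_iSup_of_le (Prod.fst ⁻¹' H₁) (le_iSup_of_le (Prod.fst ⁻¹' K₁)
        (le_iSup_of_le hcond ?_))
      exact le_sup_of_le_left (le_iSup_of_le H₁ (le_iSup_of_le K₁
        (le_iSup_of_le ⟨rfl, rfl⟩ le_rfl)))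
    · refine iSup_le fun H₂ => iSup_le fun K₂ => iSup_le fun ⟨⟨n, hn⟩, hK⟩ => ?_
      have hcond : (∃ n : ℕ, ∀ m ≥ n, detRun δ (q1, q2) w m ∉ Prod.snd ⁻¹' H₂) ∧
          (∀ n : ℕ, ∃ m ≥ n, detRun δ (q1, q2) w m ∈ Prod.snd ⁻¹' K₂) := by
        constructor
        · exact ⟨n, fun m hm => by simp [hrun m, hn m hm]⟩
        · intro n'
          obtain ⟨m, hm, hmem⟩ := hK n'
          exact ⟨m, hm, by simp [hrun m, hmem]⟩
      refine le_iSup_of_le (Prod.snd ⁻¹' H₂) (le_iSup_of_le (Prod.snd ⁻¹' K₂)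
        (le_iSup_of_le hcond ?_))
      exact le_sup_of_le_right (le_iSup_of_le H₂ (le_iSup_of_le K₂
        (le_iSup_of_le ⟨rfl, rfl⟩ le_rfl)))
  · refine iSup_le fun H => iSup_le fun K => iSup_le fun ⟨⟨n, hn⟩, hK⟩ => sup_le ?_ ?_
    · refine iSup_le fun H₁ => iSup_le fun K₁ => iSup_le fun ⟨hH, hKe⟩ => ?_
      subst hH; subst hKe
      refine le_sup_of_le_left (le_iSup_of_le H₁ (le_iSup_of_le K₁
        (le_iSup_of_le ⟨⟨n, fun m hm => ?_⟩, fun n' => ?_⟩ le_rfl)))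
      · have := hn m hm
        simpa [hrun m] using this
      · obtain ⟨m, hm, hmem⟩ := hK n'
        exact ⟨m, hm, by simpa [hrun m] using hmem⟩
    · refine iSup_le fun H₂ => iSup_le fun K₂ => iSup_le fun ⟨hH, hKe⟩ => ?_
      subst hH; subst hKe
      refine le_sup_of_le_right (le_iSup_of_le H₂ (le_iSup_of_le K₂
        (le_iSup_of_le ⟨⟨n, fun m hm => ?_⟩, fun n' => ?_⟩ le_rfl)))
      · have := hn m hm
        simpa [hrun m] using this
      · obtain ⟨m, hm, hmem⟩ := hK n'
        exact ⟨m, hm, by simpa [hrun m] using hmem⟩
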